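/- Let G be a locally compact Hausdorff group, K a compact group, α : G^* → K a continuous semigroup homomorphism, ι an idempotent in G^*, and define α_l : G^{luc} → K by α_l(x) = α(xι). Then: (i) α_l is a continuous extension of α (in particular α(ι) = e_K); (ii) if β : G^{luc} → K is any semigroup homomorphism extending α, then β = α_l (so a homomorphic extension, if it exists, is unique and automatically continuous); (iii) if ι commutes with every element of G, then α_l is a semigroup homomorphism on G^{luc}. -/

import Mathlib

open scoped BoundedContinuousFunction
open Filter Topology

set_option synthInstance.maxHeartbeats 1000000
set_option maxHeartbeats 1000000

namespace LucPaper

variable {G : Type*} [Group G] [TopologicalSpace G] [IsTopologicalGroup G]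

/-- Left translation of a bounded continuous function: `lTrans g f x = f (g * x)`. -/
noncomputable def lTrans (g : G) (f : G →ᵇ ℂ) : G →ᵇ ℂ :=
  f.compContinuous ⟨fun x => g * x, continuous_const.mul continuous_id⟩

@[simp] lemma lTrans_apply (g : G) (f : G →ᵇ ℂ) (x : G) : lTrans g f x = f (g * x) := rfl

lemma lTrans_mul (g : G) (f h : G →ᵇ ℂ) : lTrans g (f * h) = lTrans g f * lTrans g h := by
  ext x; simp [lTrans]

lemma lTrans_add (g : G) (f h : G →ᵇ ℂ) : lTrans g (f + h) = lTrans g f + lTrans g h := by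
  ext x; simp [lTrans]

lemma lTrans_smul (g : G) (c : ℂ) (f : G →ᵇ ℂ) : lTrans g (c • f) = c • lTrans g f := by
  ext x; simp [lTrans]

lemma lTrans_sub (g : G) (f h : G →ᵇ ℂ) : lTrans g (f - h) = lTrans g f - lTrans g h := by
  ext x; simp [lTrans]

lemma lTrans_lTrans (x g : G) (f : G →ᵇ ℂ) : lTrans x (lTrans g f) = lTrans (g * x) f := by
  ext y; simp [mul_assoc]

lemma norm_lTrans_le (g : G) (f : G →ᵇ ℂ) : ‖lTrans g f‖ ≤ ‖f‖ :=
  f.norm_compContinuous_le _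

lemma lTrans_algebraMap (g : G) (c : ℂ) :
    lTrans g (algebraMap ℂ (G →ᵇ ℂ) c) = algebraMap ℂ (G →ᵇ ℂ) c := by
  ext x; simp [lTrans]

lemma algebraMap_mem_luc (c : ℂ) :
    Continuous fun g : G => lTrans g (algebraMap ℂ (G →ᵇ ℂ) c) := by
  have e : (fun g : G => lTrans g (algebraMap ℂ (G →ᵇ ℂ) c)) =
      fun _ : G => algebraMap ℂ (G →ᵇ ℂ) c :=
    funext fun g => lTrans_algebraMap g c
  rw [e]
  exact continuous_const

/-- The `C*`-algebra `LUC(G)` of bounded left uniformly continuous complex functions on `G`,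
realized as a subalgebra of the bounded continuous functions. -/
noncomputable def LUC (G : Type*) [Group G] [TopologicalSpace G] [IsTopologicalGroup G] :
    Subalgebra ℂ (G →ᵇ ℂ) where
  carrier := {f | Continuous fun g : G => lTrans g f}
  mul_mem' {f h} hf hh := by
    have hf' : Continuous fun g : G => lTrans g f := hf
    have hh' : Continuous fun g : G => lTrans g h := hh
    have e : (fun g : G => lTrans g (f * h)) = fun g => lTrans g f * lTrans g h :=
      funext fun g => lTrans_mul g f h
    show Continuous fun g : G => lTrans g (f * h)
    rw [e]
    exact hf'.mul hh'
  add_mem' {f h} hf hh := by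
    have hf' : Continuous fun g : G => lTrans g f := hf
    have hh' : Continuous fun g : G => lTrans g h := hh
    have e : (fun g : G => lTrans g (f + h)) = fun g => lTrans g f + lTrans g h :=
      funext fun g => lTrans_add g f h
    show Continuous fun g : G => lTrans g (f + h)
    rw [e]
    exact hf'.add hh'
  algebraMap_mem' c := algebraMap_mem_luc c


section Instances
set_option synthInstance.maxHeartbeats 1000000 in
noncomputable instance instLUCNormedAddCommGroup (G : Type*) [Group G] [TopologicalSpace G]
    [IsTopologicalGroup G] : NormedAddCommGroup (LUC G) := inferInstance

set_option synthInstance.maxHeartbeats 1000000 in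
noncomputable instance instLUCNormedSpace (G : Type*) [Group G] [TopologicalSpace G]
    [IsTopologicalGroup G] : NormedSpace ℂ (LUC G) := inferInstance

set_option synthInstance.maxHeartbeats 1000000 in
noncomputable instance instLUCNormedRing (G : Type*) [Group G] [TopologicalSpace G]
    [IsTopologicalGroup G] : NormedRing (LUC G) := inferInstance
end Instances

/-- `LUC(G)^*`, the dual Banach space of `LUC(G)`. -/
noncomputable abbrev Ld (G : Type*) [Group G] [TopologicalSpace G] [IsTopologicalGroup G] :=
  StrongDual ℂ (LUC G)

/-- Left translation as a map `LUC G → LUC G`. -/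
noncomputable def lTransL (g : G) (f : LUC G) : LUC G :=
  ⟨lTrans g (f : G →ᵇ ℂ), by
    have hf : Continuous fun h : G => lTrans h (f : G →ᵇ ℂ) := f.2
    have e : (fun h : G => lTrans h (lTrans g (f : G →ᵇ ℂ))) =
        (fun k : G => lTrans k (f : G →ᵇ ℂ)) ∘ fun h : G => g * h := by
      funext h
      exact lTrans_lTrans h g (f : G →ᵇ ℂ)
    show Continuous fun h : G => lTrans h (lTrans g (f : G →ᵇ ℂ))
    rw [e]
    exact hf.comp (continuous_const.mul continuous_id)⟩

@[simp] lemma lTransL_coe (g : G) (f : LUC G) :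
    (lTransL g f : G →ᵇ ℂ) = lTrans g (f : G →ᵇ ℂ) := rfl

lemma continuous_lTransL (f : LUC G) : Continuous fun g : G => lTransL g f :=
  Continuous.subtype_mk f.2 _

lemma norm_lTransL_le (g : G) (f : LUC G) : ‖lTransL g f‖ ≤ ‖f‖ :=
  norm_lTrans_le g (f : G →ᵇ ℂ)

lemma lTransL_add (g : G) (f h : LUC G) : lTransL g (f + h) = lTransL g f + lTransL g h :=
  Subtype.ext (lTrans_add g _ _)

lemma lTransL_smul (g : G) (c : ℂ) (f : LUC G) : lTransL g (c • f) = c • lTransL g f :=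
  Subtype.ext (lTrans_smul g c _)

lemma lTransL_sub (g : G) (f h : LUC G) : lTransL g (f - h) = lTransL g f - lTransL g h :=
  Subtype.ext (lTrans_sub g _ _)

lemma lTransL_mul (g : G) (f h : LUC G) : lTransL g (f * h) = lTransL g f * lTransL g h :=
  Subtype.ext (lTrans_mul g _ _)

lemma lTransL_lTransL (x g : G) (f : LUC G) : lTransL x (lTransL g f) = lTransL (g * x) f :=
  Subtype.ext (lTrans_lTrans x g _)

end LucPaper

namespace LucPaper
variable {G : Type*} [Group G] [TopologicalSpace G] [IsTopologicalGroup G]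

/-- The function `n f : g ↦ ⟨n, l_g f⟩` as a bounded continuous function. -/
noncomputable def arensBCF (n : Ld G) (f : LUC G) : G →ᵇ ℂ :=
  BoundedContinuousFunction.ofNormedAddCommGroup (fun g : G => n (lTransL g f))
    (n.continuous.comp (continuous_lTransL f)) (‖n‖ * ‖f‖)
    (fun g => le_trans (n.le_opNorm _)
      (mul_le_mul_of_nonneg_left (norm_lTransL_le g f) (norm_nonneg n)))

@[simp] lemma arensBCF_apply (n : Ld G) (f : LUC G) (g : G) :
    arensBCF n f g = n (lTransL g f) := rfl

lemma norm_arensBCF_le (n : Ld G) (f : LUC G) : ‖arensBCF n f‖ ≤ ‖n‖ * ‖f‖ :=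
  BoundedContinuousFunction.norm_ofNormedAddCommGroup_le _
    (mul_nonneg (norm_nonneg n) (norm_nonneg f)) _

lemma arensBCF_sub (n : Ld G) (f h : LUC G) :
    arensBCF n (f - h) = arensBCF n f - arensBCF n h := by
  ext g
  simp [lTransL_sub]

lemma arensBCF_add (n : Ld G) (f h : LUC G) :
    arensBCF n (f + h) = arensBCF n f + arensBCF n h := by
  ext g
  simp [lTransL_add]

lemma arensBCF_smul (n : Ld G) (c : ℂ) (f : LUC G) :
    arensBCF n (c • f) = c • arensBCF n f := by
  ext g
  simp [lTransL_smul]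

lemma lipschitz_arensBCF (n : Ld G) :
    LipschitzWith ‖n‖₊ fun f : LUC G => arensBCF n f := by
  apply LipschitzWith.of_dist_le_mul
  intro f h
  rw [dist_eq_norm, dist_eq_norm, ← arensBCF_sub]
  have : ‖f - h‖ = ‖(f - h : LUC G)‖ := rfl
  calc ‖arensBCF n (f - h)‖ ≤ ‖n‖ * ‖f - h‖ := norm_arensBCF_le n (f - h)
    _ = ‖n‖₊ * ‖f - h‖ := rfl

lemma lTrans_arensBCF (n : Ld G) (f : LUC G) (g : G) :
    lTrans g (arensBCF n f) = arensBCF n (lTransL g f) := by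
  ext x
  simp only [lTrans_apply, arensBCF_apply]
  rw [lTransL_lTransL]

/-- The element `n f` of `LUC(G)`. -/
noncomputable def arensFn (n : Ld G) (f : LUC G) : LUC G :=
  ⟨arensBCF n f, by
    have e : (fun g : G => lTrans g (arensBCF n f)) =
        (fun h : LUC G => arensBCF n h) ∘ fun g : G => lTransL g f :=
      funext fun g => lTrans_arensBCF n f g
    show Continuous fun g : G => lTrans g (arensBCF n f)
    rw [e]
    exact (lipschitz_arensBCF n).continuous.comp (continuous_lTransL f)⟩

@[simp] lemma arensFn_coe (n : Ld G) (f : LUC G) : (arensFn n f : G →ᵇ ℂ) = arensBCF n f := rfl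

lemma norm_arensFn_le (n : Ld G) (f : LUC G) : ‖arensFn n f‖ ≤ ‖n‖ * ‖f‖ :=
  norm_arensBCF_le n f

/-- The Arens-type product on `LUC(G)^*`: `⟨m · n, f⟩ = ⟨m, n f⟩`. -/
noncomputable def arens (m n : Ld G) : Ld G :=
  LinearMap.mkContinuous
    { toFun := fun f : LUC G => m (arensFn n f)
      map_add' := fun f h => by
        show m (arensFn n (f + h)) = m (arensFn n f) + m (arensFn n h)
        rw [show arensFn n (f + h) = arensFn n f + arensFn n h from
          Subtype.ext (arensBCF_add n f h), map_add]
      map_smul' := fun c f => by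
        show m (arensFn n (c • f)) = c • m (arensFn n f)
        rw [show arensFn n (c • f) = c • arensFn n f from
          Subtype.ext (arensBCF_smul n c f), map_smul] }
    (‖m‖ * ‖n‖)
    (fun f => by
      calc ‖m (arensFn n f)‖ ≤ ‖m‖ * ‖arensFn n f‖ := m.le_opNorm _
        _ ≤ ‖m‖ * (‖n‖ * ‖f‖) :=
            mul_le_mul_of_nonneg_left (norm_arensFn_le n f) (norm_nonneg m)
        _ = ‖m‖ * ‖n‖ * ‖f‖ := by ring)

@[simp] lemma arens_apply (m n : Ld G) (f : LUC G) : arens m n f = m (arensFn n f) := rfl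

end LucPaper
namespace LucPaper
variable {G : Type*} [Group G] [TopologicalSpace G] [IsTopologicalGroup G]

/-- Evaluation at a point of `G`, as an element of `LUC(G)^*`. -/
noncomputable def evalChar (g : G) : Ld G :=
  LinearMap.mkContinuous
    { toFun := fun f : LUC G => (f : G →ᵇ ℂ) g
      map_add' := fun f h => rfl
      map_smul' := fun c f => rfl }
    1 (fun f => by rw [one_mul]; exact (f : G →ᵇ ℂ).norm_coe_le_norm g)

@[simp] lemma evalChar_apply (g : G) (f : LUC G) : evalChar g f = (f : G →ᵇ ℂ) g := rfl

variable (G) in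
/-- The `LUC`-compactification `G^{luc}` realized as the set of nonzero multiplicative
functionals in `LUC(G)^*`. -/
def gLuc : Set (Ld G) :=
  {m | m ≠ 0 ∧ ∀ f h : LUC G, m (f * h) = m f * m h}

variable (G) in
/-- The corona `G^* = G^{luc} \ G` in `LUC(G)^*`. -/
def gStar : Set (Ld G) :=
  gLuc G \ Set.range (evalChar (G := G))

lemma evalChar_mem_gLuc (g : G) : evalChar g ∈ gLuc G := by
  constructor
  · intro h0
    have h1 : evalChar g (1 : LUC G) = 0 := by rw [h0]; rfl
    have h2 : evalChar g (1 : LUC G) = 1 := rfl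
    rw [h2] at h1
    exact one_ne_zero h1
  · intro f h
    have : ((f * h : LUC G) : G →ᵇ ℂ) = (f : G →ᵇ ℂ) * (h : G →ᵇ ℂ) := rfl
    simp [this]

end LucPaper
namespace LucPaper
variable {G : Type*} [Group G] [TopologicalSpace G] [IsTopologicalGroup G]

/-- Membership in `C_0(G)`: vanishing at infinity. -/
def IsC0 (f : G →ᵇ ℂ) : Prop := Tendsto (f : G → ℂ) (cocompact G) (𝓝 0)

variable (G) in
/-- The annihilator `C_0(G)^⊥` of `C_0(G)` in `LUC(G)^*`. -/
noncomputable def C0perp : Submodule ℂ (Ld G) where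
  carrier := {m | ∀ f : LUC G, IsC0 (f : G →ᵇ ℂ) → m f = 0}
  add_mem' {m n} hm hn := fun f hf => by
    simp [hm f hf, hn f hf]
  zero_mem' := fun f _ => rfl
  smul_mem' c m hm := fun f hf => by
    simp [hm f hf]

lemma isC0_lTrans {f : G →ᵇ ℂ} (hf : IsC0 f) (g : G) : IsC0 (lTrans g f) := by
  have h1 : Tendsto (⇑(Homeomorph.mulLeft g)) (cocompact G) (cocompact G) :=
    tendsto_map.mono_right (le_of_eq ((Homeomorph.mulLeft g).map_cocompact))
  have h1' : Tendsto (fun x : G => g * x) (cocompact G) (cocompact G) := h1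
  exact hf.comp h1'

lemma isC0_rTransBCF {f : G →ᵇ ℂ} (hf : IsC0 f) (x : G) :
    IsC0 (f.compContinuous ⟨fun g : G => g * x, continuous_id.mul continuous_const⟩) := by
  have h1 : Tendsto (⇑(Homeomorph.mulRight x)) (cocompact G) (cocompact G) :=
    tendsto_map.mono_right (le_of_eq ((Homeomorph.mulRight x).map_cocompact))
  have h1' : Tendsto (fun g : G => g * x) (cocompact G) (cocompact G) := h1
  exact hf.comp h1'

/-- `C_0(G)^⊥` is a left ideal for the Arens product: if `n ∈ C_0(G)^⊥` then `m · n ∈ C_0(G)^⊥`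
for every `m`. -/
lemma arens_mem_C0perp_left (m : Ld G) {n : Ld G} (hn : n ∈ C0perp G) :
    arens m n ∈ C0perp G := by
  intro f hf
  have hz : arensFn n f = 0 := by
    apply Subtype.ext
    ext g
    exact hn (lTransL g f) (isC0_lTrans hf g)
  rw [arens_apply, hz, map_zero]

/-- Multiplying an element of `C_0(G)^⊥` by a point evaluation on the right stays in
`C_0(G)^⊥`. -/
lemma arens_evalChar_mem_C0perp {m : Ld G} (hm : m ∈ C0perp G) (x : G) :
    arens m (evalChar x) ∈ C0perp G := by
  intro f hf
  rw [arens_apply]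
  apply hm
  show IsC0 (arensBCF (evalChar x) f)
  have e : (arensBCF (evalChar x) f : G → ℂ) =
      ((f : G →ᵇ ℂ).compContinuous ⟨fun g : G => g * x, continuous_id.mul continuous_const⟩ :
        G → ℂ) := by
    funext g
    rfl
  show Tendsto (arensBCF (evalChar x) f : G → ℂ) (cocompact G) (𝓝 0)
  rw [e]
  exact isC0_rTransBCF hf x

/-- The multiplication on `C_0(G)^⊥` induced by the Arens product. -/
noncomputable instance : Mul (C0perp G) :=
  ⟨fun m n => ⟨arens m.1 n.1, arens_mem_C0perp_left m.1 n.2⟩⟩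

@[simp] lemma C0perp_mul_coe (m n : C0perp G) : ((m * n : C0perp G) : Ld G) = arens m.1 n.1 := rfl

end LucPaper
namespace LucPaper
variable {G : Type*} [Group G] [TopologicalSpace G] [IsTopologicalGroup G]

section WeakStar

variable {H : Type*} [Group H] [TopologicalSpace H] [IsTopologicalGroup H]

/-- Weak-star continuity for a map `C_0(G)^⊥ → C_0(H)^⊥`, phrased via filters:
whenever a filter converges pointwise (weak-star) to `m`, the images converge pointwise
(weak-star) to the image of `m`. -/
def WStarContinuousC0 (T : C0perp G → C0perp H) : Prop :=
  ∀ (l : Filter (C0perp G)) (m : C0perp G),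
    (∀ f : LUC G, Tendsto (fun n : C0perp G => (n : Ld G) f) l (𝓝 ((m : Ld G) f))) →
    ∀ f : LUC H, Tendsto (fun n : C0perp G => (T n : Ld H) f) l (𝓝 ((T m : Ld H) f))

/-- Weak-star continuity for a map `LUC(G)^* → LUC(H)^*`, phrased via filters. -/
def WStarContinuousD (T : Ld G → Ld H) : Prop :=
  ∀ (l : Filter (Ld G)) (m : Ld G),
    (∀ f : LUC G, Tendsto (fun n : Ld G => n f) l (𝓝 (m f))) →
    ∀ f : LUC H, Tendsto (fun n : Ld G => T n f) l (𝓝 (T m f))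

end WeakStar

section WeakDualSide

/-- `LUC(G)^*` equipped with its weak-star topology. -/
noncomputable abbrev LdW (G : Type*) [Group G] [TopologicalSpace G] [IsTopologicalGroup G] :=
  WeakDual ℂ (LUC G)

variable (G) in
/-- The `LUC`-compactification `G^{luc}` as a subset of the weak-star dual. -/
def gLucW : Set (LdW G) :=
  {m | m ≠ 0 ∧ ∀ f h : LUC G, m (f * h) = m f * m h}

/-- Evaluation at a point of `G` as an element of the weak-star dual. -/
noncomputable def evalCharW (g : G) : LdW G :=
  StrongDual.toWeakDual (evalChar g)

variable (G) in
/-- The corona `G^* = G^{luc} \ G` inside the weak-star dual. -/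
def gStarW : Set (LdW G) :=
  gLucW G \ Set.range (evalCharW (G := G))

/-- The Arens product transported to the weak-star dual. -/
noncomputable def arensW (m n : LdW G) : LdW G :=
  StrongDual.toWeakDual
    (arens (WeakDual.toStrongDual m) (WeakDual.toStrongDual n))

lemma evalCharW_mem_gLucW (g : G) : evalCharW g ∈ gLucW G := by
  have h := evalChar_mem_gLuc (g := g)
  constructor
  · intro h0
    apply h.1
    have : WeakDual.toStrongDual (evalCharW g) = WeakDual.toStrongDual (0 : LdW G) := by
      rw [h0]
    simpa [evalCharW] using this
  · intro f k
    exact h.2 f k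

end WeakDualSide

section FSpace

/-- `X` is an F-space: every bounded continuous real function `f` factors as `f = k·|f|`
with `k` bounded continuous. -/
def IsFSpace (X : Type*) [TopologicalSpace X] : Prop :=
  ∀ f : X →ᵇ ℝ, ∃ k : X →ᵇ ℝ, ∀ x : X, f x = k x * |f x|

/-- A P-point: every `G_δ` set containing the point is a neighbourhood of the point. -/
def IsPPoint {X : Type*} [TopologicalSpace X] (p : X) : Prop :=
  ∀ s : Set X, p ∈ s → (∃ U : ℕ → Set X, (∀ n, IsOpen (U n)) ∧ s = ⋂ n, U n) → s ∈ 𝓝 p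

end FSpace

end LucPaper


open LucPaper Filter Topology
open scoped BoundedContinuousFunction


section Statement15Aux
open Metric
open scoped ComplexConjugate



namespace LucPaper
variable {G : Type*} [Group G] [TopologicalSpace G] [IsTopologicalGroup G]

lemma arensW_apply' (m n : LdW G) (f : LUC G) : arensW m n f = m (arensFn n f) := rfl

lemma arensFn_lTransL (n : Ld G) (g : G) (f : LUC G) :
    arensFn n (lTransL g f) = lTransL g (arensFn n f) :=
  Subtype.ext (lTrans_arensBCF n f g).symm

lemma arensFn_arensFn (n p : Ld G) (f : LUC G) :
    arensFn (arens n p) f = arensFn n (arensFn p f) := by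
  apply Subtype.ext
  ext g
  show (arens n p) (lTransL g f) = n (lTransL g (arensFn p f))
  rw [← arensFn_lTransL]
  rfl

lemma arensW_assoc (m n p : LdW G) :
    arensW (arensW m n) p = arensW m (arensW n p) := by
  apply DFunLike.ext
  intro f
  show (arens (arens _ _) _) f = (arens _ (arens _ _)) f
  rw [arens_apply, arens_apply, arens_apply, arensFn_arensFn]

lemma lTransL_one (g : G) : lTransL g (1 : LUC G) = 1 := by
  apply Subtype.ext; ext x; rfl

lemma gLucW_apply_one {m : LdW G} (hm : m ∈ gLucW G) : m (1 : LUC G) = 1 := by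
  have h2 : m 1 ≠ 0 := by
    intro h0
    apply hm.1
    apply DFunLike.ext
    intro f
    have h3 := hm.2 f 1
    rw [mul_one, h0, mul_zero] at h3
    rw [h3]
    rfl
  have h1 : m 1 * m 1 = m 1 * 1 := by rw [mul_one, ← hm.2 1 1, mul_one]
  exact mul_left_cancel₀ h2 h1

lemma arensFn_one (n : LdW G) (hn : n ∈ gLucW G) :
    arensFn (n : Ld G) (1 : LUC G) = 1 := by
  apply Subtype.ext; ext x
  show n (lTransL x (1 : LUC G)) = 1
  rw [lTransL_one]
  exact gLucW_apply_one hn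

lemma arensW_mem_gLucW {m n : LdW G} (hm : m ∈ gLucW G) (hn : n ∈ gLucW G) :
    arensW m n ∈ gLucW G := by
  have hmul : ∀ f h : LUC G, arensW m n (f * h) = arensW m n f * arensW m n h := by
    intro f h
    rw [arensW_apply', arensW_apply', arensW_apply']
    have heq : arensFn (n : Ld G) (f * h) =
        arensFn (n : Ld G) f * arensFn (n : Ld G) h := by
      apply Subtype.ext
      ext g
      show n (lTransL g (f * h)) = (arensFn (n : Ld G) f : G →ᵇ ℂ) g *
        (arensFn (n : Ld G) h : G →ᵇ ℂ) g
      rw [lTransL_mul]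
      exact hn.2 _ _
    show m (arensFn (n : Ld G) (f * h)) = m (arensFn (n : Ld G) f) * m (arensFn (n : Ld G) h)
    rw [heq]
    exact hm.2 _ _
  refine ⟨?_, hmul⟩
  intro h0
  have h1 : arensW m n (1 : LUC G) = 0 := by rw [h0]; rfl
  rw [arensW_apply'] at h1
  have h2 : m (arensFn (n : Ld G) (1 : LUC G)) = 0 := h1
  rw [arensFn_one n hn, gLucW_apply_one hm] at h2
  exact one_ne_zero h2

lemma evalCharW_apply (g : G) (f : LUC G) : evalCharW g f = (f : G →ᵇ ℂ) g := rfl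

lemma arensW_evalCharW_left (g : G) (n : LdW G) (f : LUC G) :
    arensW (evalCharW g) n f = n (lTransL g f) := rfl

lemma lTransL_lone (f : LUC G) : lTransL (1 : G) f = f := by
  apply Subtype.ext; ext x
  show (f : G →ᵇ ℂ) (1 * x) = (f : G →ᵇ ℂ) x
  rw [one_mul]

/-- The ideal property: `x · ι ∈ G^*` for `x ∈ G^{luc}` and `ι` an idempotent of `G^*`. -/
lemma arensW_idem_mem_gStarW {x : LdW G} (hx : x ∈ gLucW G) {ι : LdW G}
    (hι : ι ∈ gStarW G) (hii : arensW ι ι = ι) : arensW x ι ∈ gStarW G := by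
  refine ⟨arensW_mem_gLucW hx hι.1, ?_⟩
  rintro ⟨g, hg⟩
  have h1 : arensW (evalCharW g) ι = evalCharW g := by
    have h0 := congrArg (fun z => arensW z ι) hg
    simpa [arensW_assoc, hii, hg] using h0
  apply hι.2
  refine ⟨1, ?_⟩
  apply DFunLike.ext
  intro h
  have h2 := congrFun (congrArg DFunLike.coe h1) (lTransL g⁻¹ h)
  rw [arensW_evalCharW_left, lTransL_lTransL, inv_mul_cancel, lTransL_lone] at h2
  rw [h2]
  show _ = (h : G →ᵇ ℂ) (g⁻¹ * g)
  rw [inv_mul_cancel]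
  rfl

/-- Right multiplication is weak-star continuous. -/
lemma continuous_arensW_right (c : LdW G) : Continuous fun m : LdW G => arensW m c :=
  WeakDual.continuous_of_continuous_eval fun f => WeakDual.eval_continuous (arensFn (c : Ld G) f)

end LucPaper


namespace LucPaper
variable {G : Type*} [Group G] [TopologicalSpace G] [IsTopologicalGroup G]

lemma LUC.norm_coe (f : LUC G) : ‖f‖ = ‖(f : G →ᵇ ℂ)‖ := rfl

lemma LUC.coe_mul (f h : LUC G) : ((f * h : LUC G) : G →ᵇ ℂ) = (f : G →ᵇ ℂ) * h := rfl
lemma LUC.coe_add (f h : LUC G) : ((f + h : LUC G) : G →ᵇ ℂ) = (f : G →ᵇ ℂ) + h := rfl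
lemma LUC.coe_sub (f h : LUC G) : ((f - h : LUC G) : G →ᵇ ℂ) = (f : G →ᵇ ℂ) - h := rfl
lemma LUC.coe_smul (c : ℂ) (f : LUC G) : ((c • f : LUC G) : G →ᵇ ℂ) = c • (f : G →ᵇ ℂ) := rfl
lemma LUC.coe_one : ((1 : LUC G) : G →ᵇ ℂ) = 1 := rfl

/-- complex conjugation preserves LUC -/
lemma star_mem_LUC (f : LUC G) : star (f : G →ᵇ ℂ) ∈ LUC G := by
  have he : (fun g : G => lTrans g (star (f : G →ᵇ ℂ))) =
      (fun φ : G →ᵇ ℂ => star φ) ∘ (fun g : G => lTrans g (f : G →ᵇ ℂ)) := by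
    funext g; ext x; rfl
  show Continuous fun g : G => lTrans g (star (f : G →ᵇ ℂ))
  rw [he]
  exact continuous_star.comp f.2

/-- conjugation as a map `LUC G → LUC G` -/
noncomputable def starL (f : LUC G) : LUC G := ⟨star (f : G →ᵇ ℂ), star_mem_LUC f⟩

lemma starL_apply (f : LUC G) (x : G) : (starL f : G →ᵇ ℂ) x = conj ((f : G →ᵇ ℂ) x) := rfl

end LucPaper

namespace LucPaper
variable {G : Type*} [Group G] [TopologicalSpace G] [IsTopologicalGroup G]

lemma gLucW_apply_pow {m : LdW G} (hm : m ∈ gLucW G) (f : LUC G) (n : ℕ) :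
    m (f ^ (n + 1)) = m f ^ (n + 1) := by
  induction n with
  | zero => simp
  | succ k ih => rw [pow_succ, hm.2, ih, ← pow_succ]

lemma gLucW_norm_apply_le {m : LdW G} (hm : m ∈ gLucW G) (f : LUC G) :
    ‖m f‖ ≤ ‖f‖ := by
  by_contra hlt
  push_neg at hlt
  have hfpos : 0 < ‖f‖ := by
    rcases eq_or_lt_of_le (norm_nonneg f) with h0 | h0
    · exfalso
      have hf : f = 0 := norm_eq_zero.mp h0.symm
      rw [hf, map_zero, norm_zero, norm_zero] at hlt
      exact lt_irrefl 0 hlt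
    · exact h0
  set r : ℝ := ‖m f‖ / ‖f‖ with hr
  have hr1 : 1 < r := (one_lt_div hfpos).2 hlt
  set C : ℝ := ‖WeakDual.toStrongDual m‖ with hC
  have hbound : ∀ n : ℕ, r ^ (n + 1) ≤ C := by
    intro n
    have h1 : ‖m (f ^ (n + 1))‖ ≤ C * ‖f ^ (n + 1)‖ :=
      (WeakDual.toStrongDual m).le_opNorm (f ^ (n + 1))
    rw [gLucW_apply_pow hm, norm_pow] at h1
    have h2 : ‖f ^ (n + 1)‖ ≤ ‖f‖ ^ (n + 1) := norm_pow_le' f (Nat.succ_pos n)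
    have h3 : ‖m f‖ ^ (n + 1) ≤ C * ‖f‖ ^ (n + 1) :=
      h1.trans (by nlinarith [norm_nonneg (WeakDual.toStrongDual m), pow_nonneg (norm_nonneg f) (n+1), pow_le_pow_left₀ (norm_nonneg f) (le_refl ‖f‖) (n+1)] )
    have h4 : r ^ (n + 1) = ‖m f‖ ^ (n + 1) / ‖f‖ ^ (n + 1) := by
      rw [hr, div_pow]
    rw [h4, div_le_iff₀ (pow_pos hfpos (n + 1))]
    calc ‖m f‖ ^ (n+1) ≤ C * ‖f‖ ^ (n+1) := h3
      _ = C * ‖f‖ ^ (n+1) := rfl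
  obtain ⟨n, hn⟩ := pow_unbounded_of_one_lt C hr1
  exact absurd (hbound n) (by push_neg; calc C < r ^ n := hn
    _ ≤ r ^ (n + 1) := pow_le_pow_right₀ (le_of_lt hr1) (Nat.le_succ n))

end LucPaper

namespace LucPaper
variable {G : Type*} [Group G] [TopologicalSpace G] [IsTopologicalGroup G]

/-- a multiplicative functional is real on real-valued functions -/
lemma gLucW_apply_real {m : LdW G} (hm : m ∈ gLucW G) (f : LUC G)
    (hf : ∀ x : G, ((f : G →ᵇ ℂ) x).im = 0) : (m f).im = 0 := by
  by_contra him
  set c : ℂ := m f with hc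
  have key : ∀ t : ℝ, c.re ^ 2 + (c.im + t) ^ 2 ≤ ‖f‖ ^ 2 + t ^ 2 := by
    intro t
    set φ : LUC G := f + ((t : ℂ) * Complex.I) • (1 : LUC G) with hφ
    have hmφ : m φ = c + t * Complex.I := by
      rw [hφ, map_add, map_smul, gLucW_apply_one hm]
      simp only [smul_eq_mul, mul_one, hc]
    have hφle : ‖φ‖ ≤ Real.sqrt (‖f‖ ^ 2 + t ^ 2) := by
      rw [LUC.norm_coe]
      apply (BoundedContinuousFunction.norm_le (Real.sqrt_nonneg _)).2
      intro x
      have hx : ((φ : G →ᵇ ℂ) x) = (f : G →ᵇ ℂ) x + t * Complex.I := by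
        rw [hφ, LUC.coe_add, LUC.coe_smul, LUC.coe_one]
        simp
      rw [hx]
      rw [show ((f : G →ᵇ ℂ) x + t * Complex.I) =
        Complex.mk (((f : G →ᵇ ℂ) x).re) t by
          apply Complex.ext <;> simp [hf x]]
      have hre : |((f : G →ᵇ ℂ) x).re| ≤ ‖f‖ := by
        have h1 : |((f : G →ᵇ ℂ) x).re| ≤ ‖((f : G →ᵇ ℂ) x)‖ :=
          Complex.abs_re_le_norm _
        have h2 : ‖((f : G →ᵇ ℂ) x)‖ ≤ ‖f‖ :=
          (f : G →ᵇ ℂ).norm_coe_le_norm x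
        exact h1.trans h2
      rw [Complex.norm_def, Complex.normSq_mk]
      apply Real.sqrt_le_sqrt
      nlinarith [abs_nonneg (((f : G →ᵇ ℂ) x).re), sq_abs (((f : G →ᵇ ℂ) x).re),
        norm_nonneg f]
    have h1 : ‖m φ‖ ≤ Real.sqrt (‖f‖ ^ 2 + t ^ 2) := (gLucW_norm_apply_le hm φ).trans hφle
    have h2 : ‖m φ‖ ^ 2 ≤ ‖f‖ ^ 2 + t ^ 2 := by
      have := pow_le_pow_left₀ (norm_nonneg (m φ)) h1 2
      rwa [Real.sq_sqrt (by positivity)] at this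
    rw [hmφ] at h2
    have h3 : ‖c + (t : ℂ) * Complex.I‖ ^ 2 = c.re ^ 2 + (c.im + t) ^ 2 := by
      rw [Complex.sq_norm, Complex.normSq_apply]
      simp
      ring
    rw [h3] at h2
    exact h2
  -- choose t large in the direction of c.im
  have hne : c.im ≠ 0 := him
  have := key ((‖f‖ ^ 2 + 1) / (2 * c.im))
  have hexp : 2 * c.im * ((‖f‖ ^ 2 + 1) / (2 * c.im)) = ‖f‖ ^ 2 + 1 := by
    field_simp
  nlinarith [sq_nonneg c.re, sq_nonneg c.im, this]

/-- a multiplicative functional commutes with conjugation -/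
lemma gLucW_apply_star {m : LdW G} (hm : m ∈ gLucW G) (f : LUC G) :
    m (starL f) = conj (m f) := by
  set a : ℂ := m f with ha
  set b : ℂ := m (starL f) with hb
  set u : LUC G := (2⁻¹ : ℂ) • (f + starL f) with hu
  set v : LUC G := (Complex.I / 2) • (starL f - f) with hv
  have hu_real : ∀ x : G, ((u : G →ᵇ ℂ) x).im = 0 := by
    intro x
    rw [hu, LUC.coe_smul, LUC.coe_add]
    simp [starL_apply, Complex.mul_im]
  have hv_real : ∀ x : G, ((v : G →ᵇ ℂ) x).im = 0 := by
    intro x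
    rw [hv, LUC.coe_smul, LUC.coe_sub]
    simp [starL_apply, Complex.mul_im, Complex.div_im]
  have hmu : m u = (2⁻¹ : ℂ) * (a + b) := by
    rw [hu, map_smul, map_add, ← ha, ← hb]
    simp
  have hmv : m v = (Complex.I / 2) * (b - a) := by
    rw [hv, map_smul, map_sub, ← ha, ← hb]
    simp
  have h1 := gLucW_apply_real hm u hu_real
  have h2 := gLucW_apply_real hm v hv_real
  rw [hmu] at h1
  rw [hmv] at h2
  apply Complex.ext
  · -- real parts equal: from h2
    have : ((Complex.I / 2) * (b - a)).im = (b.re - a.re) / 2 := by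
      simp [Complex.mul_im, Complex.div_im, Complex.div_re]
      ring
    rw [this] at h2
    have : b.re = a.re := by linarith
    simp [this]
  · have : ((2⁻¹ : ℂ) * (a + b)).im = (a.im + b.im) / 2 := by
      simp [Complex.mul_im]
      ring
    rw [this] at h1
    have : b.im = -a.im := by linarith
    simp [this]

end LucPaper


namespace LucPaper
variable {G : Type*} [Group G] [TopologicalSpace G] [IsTopologicalGroup G]

/-- evaluation at a point as an additive monoid hom `LUC G →+ ℂ` -/
noncomputable def evalAM (x : G) : LUC G →+ ℂ where
  toFun f := (f : G →ᵇ ℂ) x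
  map_zero' := rfl
  map_add' _ _ := rfl

lemma gLucW_approx {m : LdW G} (hm : m ∈ gLucW G) (J : Finset (LUC G)) {ε : ℝ}
    (hε : 0 < ε) : ∃ g : G, ∀ f ∈ J, ‖(f : G →ᵇ ℂ) g - m f‖ < ε := by
  by_contra hcon
  push_neg at hcon
  set T : LUC G → LUC G := fun f => (f - (m f) • 1) * starL (f - (m f) • 1) with hT
  set F : LUC G := ∑ f ∈ J, T f with hF
  have hmF : m F = 0 := by
    rw [hF, map_sum]
    apply Finset.sum_eq_zero
    intro f _
    have h0 : m (f - (m f) • 1) = 0 := by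
      rw [map_sub, map_smul, gLucW_apply_one hm, smul_eq_mul, mul_one, sub_self]
    rw [hT]
    show m (_ * _) = 0
    rw [hm.2, h0, zero_mul]
  set S : G → ℝ := fun x => ∑ f ∈ J, Complex.normSq ((f : G →ᵇ ℂ) x - m f) with hS
  have hFx : ∀ x : G, (F : G →ᵇ ℂ) x = (S x : ℂ) := by
    intro x
    have h1 : (F : G →ᵇ ℂ) x = ∑ f ∈ J, (T f : G →ᵇ ℂ) x := by
      rw [hF]
      exact map_sum (evalAM x) T J
    rw [h1, hS]
    push_cast
    apply Finset.sum_congr rfl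
    intro f _
    have h2 : (T f : G →ᵇ ℂ) x =
        ((f : G →ᵇ ℂ) x - m f) * conj ((f : G →ᵇ ℂ) x - m f) := by
      rw [hT]
      show ((((f - (m f) • 1 : LUC G) * starL (f - (m f) • 1) : LUC G)) : G →ᵇ ℂ) x = _
      rw [LUC.coe_mul]
      show ((f - (m f) • 1 : LUC G) : G →ᵇ ℂ) x * (starL (f - (m f) • 1) : G →ᵇ ℂ) x = _
      rw [starL_apply]
      rw [LUC.coe_sub, LUC.coe_smul, LUC.coe_one]
      simp
    rw [h2, Complex.mul_conj]
  have hSlb : ∀ x : G, ε ^ 2 ≤ S x := by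
    intro x
    obtain ⟨f₀, hf₀J, hf₀⟩ := hcon x
    have h1 : ε ^ 2 ≤ Complex.normSq ((f₀ : G →ᵇ ℂ) x - m f₀) := by
      rw [Complex.normSq_eq_norm_sq]
      have : ε ≤ ‖((f₀ : G →ᵇ ℂ) x - m f₀)‖ := hf₀
      nlinarith
    refine h1.trans ?_
    exact Finset.single_le_sum (f := fun f : LUC G => Complex.normSq ((f : G →ᵇ ℂ) x - m f))
      (fun f _ => Complex.normSq_nonneg _) hf₀J
  have hSub : ∀ x : G, S x ≤ ‖F‖ := by
    intro x
    have h1 : ‖(F : G →ᵇ ℂ) x‖ ≤ ‖F‖ := (F : G →ᵇ ℂ).norm_coe_le_norm x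
    rw [hFx x] at h1
    rw [Complex.norm_real, Real.norm_eq_abs] at h1
    exact (le_abs_self _).trans h1
  set M : ℝ := ‖F‖ with hM
  have hεM : ε ^ 2 ≤ M := (hSlb 1).trans (hSub 1)
  set cc : ℝ := (M + ε ^ 2) / 2 with hcc
  have hsub : ‖F - (cc : ℂ) • 1‖ ≤ cc - ε ^ 2 := by
    rw [LUC.norm_coe]
    apply (BoundedContinuousFunction.norm_le (by nlinarith)).2
    intro x
    have h1 : ((F - (cc : ℂ) • 1 : LUC G) : G →ᵇ ℂ) x = ((S x - cc : ℝ) : ℂ) := by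
      rw [LUC.coe_sub, LUC.coe_smul, LUC.coe_one]
      simp [hFx x]
    rw [h1, Complex.norm_real, Real.norm_eq_abs]
    rw [abs_le]
    constructor
    · have := hSlb x; nlinarith
    · have := hSub x; nlinarith
  have h2 : ‖m (F - (cc : ℂ) • 1)‖ ≤ cc - ε ^ 2 :=
    (gLucW_norm_apply_le hm _).trans hsub
  have h3 : m (F - (cc : ℂ) • 1) = -(cc : ℂ) := by
    rw [map_sub, map_smul, gLucW_apply_one hm, hmF, smul_eq_mul, mul_one, zero_sub]
  rw [h3, norm_neg, Complex.norm_real, Real.norm_eq_abs, abs_of_nonneg (by nlinarith)] at h2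
  nlinarith

lemma gLucW_mem_closure_evalCharW {m : LdW G} (hm : m ∈ gLucW G) :
    m ∈ closure (Set.range (evalCharW (G := G))) := by
  set ι : LdW G → (LUC G → ℂ) := fun n f => topDualPairing ℂ (LUC G) n f with hι
  have h1 : 𝓝 m = Filter.comap ι (Filter.pi fun f : LUC G => 𝓝 (m f)) := by
    have h0 : 𝓝 m = Filter.comap ι (𝓝 (ι m)) := nhds_induced ι m
    rw [h0, nhds_pi]
    rfl
  have hb : (𝓝 m).HasBasis
      (fun Iε : Set (LUC G) × (LUC G → ℝ) => Iε.1.Finite ∧ ∀ f ∈ Iε.1, 0 < Iε.2 f)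
      (fun Iε => ι ⁻¹' (Iε.1.pi fun f => ball (m f) (Iε.2 f))) := by
    rw [h1]
    exact (Filter.hasBasis_pi fun f : LUC G => Metric.nhds_basis_ball).comap ι
  rw [mem_closure_iff_nhds_basis hb]
  rintro ⟨I, εf⟩ ⟨hIfin, hεf⟩
  replace hIfin : I.Finite := hIfin
  replace hεf : ∀ f ∈ I, 0 < εf f := hεf
  set J : Finset (LUC G) := hIfin.toFinset with hJ
  by_cases hJne : J.Nonempty
  · set ε : ℝ := J.inf' hJne εf with hεdef
    have hεpos : 0 < ε := by
      rw [hεdef, Finset.lt_inf'_iff]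
      intro f hf
      exact hεf f (hIfin.mem_toFinset.mp hf)
    obtain ⟨g, hg⟩ := gLucW_approx hm J hεpos
    refine ⟨evalCharW g, Set.mem_range_self g, ?_⟩
    intro f hf
    have h2 := hg f (hIfin.mem_toFinset.mpr hf)
    rw [mem_ball, dist_eq_norm]
    have h3 : ι (evalCharW g) f = (f : G →ᵇ ℂ) g := rfl
    rw [h3]
    exact h2.trans_le (Finset.inf'_le εf (hIfin.mem_toFinset.mpr hf))
  · have hIe : I = ∅ := by
      ext f0
      simp only [Set.mem_empty_iff_false, iff_false]
      intro hf0
      exact hJne ⟨f0, hIfin.mem_toFinset.mpr hf0⟩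
    refine ⟨evalCharW 1, Set.mem_range_self 1, ?_⟩
    intro f hf
    exact absurd (hIe ▸ hf) (Set.notMem_empty f)

end LucPaper


namespace LucPaper
variable {G : Type*} [Group G] [TopologicalSpace G] [IsTopologicalGroup G]

/-- `G` is dense in `G^{luc}`. -/
lemma denseRange_evalCharW_gLucW :
    DenseRange (fun g : G => (⟨evalCharW g, evalCharW_mem_gLucW g⟩ : gLucW G)) := by
  intro x
  rw [closure_subtype]
  have h1 : (Subtype.val '' Set.range
      (fun g : G => (⟨evalCharW g, evalCharW_mem_gLucW g⟩ : gLucW G))) =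
      Set.range (evalCharW (G := G)) := by
    rw [← Set.range_comp]
    rfl
  rw [h1]
  exact gLucW_mem_closure_evalCharW x.2

theorem part_three
    {K : Type*} [Group K] [TopologicalSpace K] [IsTopologicalGroup K]
    [CompactSpace K] [T2Space K]
    (α : gStarW G → K) (hcont : Continuous α)
    (hhom : ∀ p q r : gStarW G, arensW p.1 q.1 = r.1 → α r = α p * α q)
    (ι : gStarW G) (hι : arensW ι.1 ι.1 = ι.1)
    (αl : gLucW G → K)
    (hαl : ∀ (x : gLucW G) (q : gStarW G), arensW x.1 ι.1 = q.1 → αl x = α q)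
    (hcomm : ∀ g : G, arensW (evalCharW g) ι.1 = arensW ι.1 (evalCharW g))
    (p q r : gLucW G) (hpq : arensW p.1 q.1 = r.1) : αl r = αl p * αl q := by
  have hαι : α ι = 1 := by
    have h := hhom ι ι ι hι
    have h' : α ι * 1 = α ι * α ι := by rw [mul_one, ← h]
    exact (mul_left_cancel h').symm
  have Hstar : ∀ x : LdW G, x ∈ gLucW G → arensW x ι.1 ∈ gStarW G := fun x hx =>
    arensW_idem_mem_gStarW hx ι.2 hι
  set qι : LdW G := arensW q.1 ι.1 with hqιdef
  -- membership lemmas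
  have mem2 : ∀ x : gLucW G, arensW x.1 qι ∈ gStarW G := by
    intro x
    rw [hqιdef, ← arensW_assoc]
    exact Hstar _ (arensW_mem_gLucW x.2 q.2)
  have mem1 : ∀ x : gLucW G, arensW x.1 (arensW ι.1 qι) ∈ gStarW G := by
    intro x
    rw [hqιdef, ← arensW_assoc, ← arensW_assoc]
    exact Hstar _ (arensW_mem_gLucW (arensW_mem_gLucW x.2 ι.2.1) q.2)
  set Φ₂ : gLucW G → K := fun x => α ⟨arensW x.1 qι, mem2 x⟩ with hΦ₂
  set Φ₁ : gLucW G → K := fun x => α ⟨arensW x.1 (arensW ι.1 qι), mem1 x⟩ with hΦ₁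
  have hΦ₂c : Continuous Φ₂ := by
    apply hcont.comp
    apply Continuous.subtype_mk
    exact (continuous_arensW_right qι).comp continuous_subtype_val
  have hΦ₁c : Continuous Φ₁ := by
    apply hcont.comp
    apply Continuous.subtype_mk
    exact (continuous_arensW_right (arensW ι.1 qι)).comp continuous_subtype_val
  -- agreement on the dense copy of G
  set e : G → gLucW G := fun g => ⟨evalCharW g, evalCharW_mem_gLucW g⟩ with he
  have hagree : Φ₁ ∘ e = Φ₂ ∘ e := by
    funext g
    show α ⟨arensW (evalCharW g) (arensW ι.1 qι), _⟩ = α ⟨arensW (evalCharW g) qι, _⟩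
    have hs : arensW (evalCharW g) qι ∈ gStarW G := mem2 (e g)
    have hel : arensW (evalCharW g) (arensW ι.1 qι) = arensW ι.1 (arensW (evalCharW g) qι) := by
      rw [← arensW_assoc, hcomm g, arensW_assoc]
    have hιs : arensW ι.1 (arensW (evalCharW g) qι) ∈ gStarW G := by
      rw [hqιdef, ← arensW_assoc, ← arensW_assoc]
      exact Hstar _ (arensW_mem_gLucW (arensW_mem_gLucW ι.2.1 (evalCharW_mem_gLucW g)) q.2)
    have h3 : α ⟨arensW (evalCharW g) (arensW ι.1 qι), mem1 (e g)⟩ =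
        α ⟨arensW ι.1 (arensW (evalCharW g) qι), hιs⟩ := by
      congr 1
      exact Subtype.ext hel
    rw [h3]
    have h4 := hhom ι ⟨arensW (evalCharW g) qι, hs⟩ ⟨arensW ι.1 (arensW (evalCharW g) qι), hιs⟩ rfl
    rw [h4, hαι, one_mul]
  have hΦeq : Φ₁ = Φ₂ := denseRange_evalCharW_gLucW.equalizer hΦ₁c hΦ₂c hagree
  -- now assemble
  have hr : αl r = α ⟨arensW r.1 ι.1, Hstar r.1 r.2⟩ := hαl r _ rfl
  have hp : αl p = α ⟨arensW p.1 ι.1, Hstar p.1 p.2⟩ := hαl p _ rfl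
  have hq : αl q = α ⟨arensW q.1 ι.1, Hstar q.1 q.2⟩ := hαl q _ rfl
  have hmemprod : arensW (arensW p.1 ι.1) qι ∈ gStarW G := by
    rw [arensW_assoc]
    exact mem1 p
  have h5 : αl p * αl q =
      α ⟨arensW (arensW p.1 ι.1) qι, hmemprod⟩ := by
    rw [hp, hq]
    exact (hhom ⟨arensW p.1 ι.1, Hstar p.1 p.2⟩ ⟨arensW q.1 ι.1, Hstar q.1 q.2⟩
      ⟨arensW (arensW p.1 ι.1) qι, hmemprod⟩ rfl).symm
  have h6 : α ⟨arensW (arensW p.1 ι.1) qι, hmemprod⟩ = Φ₁ p := by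
    congr 1
    exact Subtype.ext (arensW_assoc _ _ _)
  have h7 : Φ₂ p = α ⟨arensW r.1 ι.1, Hstar r.1 r.2⟩ := by
    show α ⟨arensW p.1 qι, mem2 p⟩ = α ⟨arensW r.1 ι.1, Hstar r.1 r.2⟩
    congr 1
    apply Subtype.ext
    show arensW p.1 qι = arensW r.1 ι.1
    rw [hqιdef, ← arensW_assoc, hpq]
  rw [hr, h5, h6, hΦeq, h7]
end LucPaper
end Statement15Aux

/-- Let `α : G^* → K` be a continuous homomorphism into a compact group, `ι` an
idempotent of `G^*` and `α_l(x) = α(xι)`. Then (i) `α_l` is a continuous extension of `α` (and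
`α(ι) = 1`), (ii) any homomorphic extension of `α` to `G^{luc}` equals `α_l`, and (iii) if `ι`
commutes with the elements of `G` then `α_l` is a homomorphism on `G^{luc}`. -/
theorem idempotent_extension_of_hom
    {G : Type*} [Group G] [TopologicalSpace G] [IsTopologicalGroup G]
    [T2Space G] [LocallyCompactSpace G]
    {K : Type*} [Group K] [TopologicalSpace K] [IsTopologicalGroup K]
    [CompactSpace K] [T2Space K]
    (α : gStarW G → K) (hcont : Continuous α)
    (hhom : ∀ p q r : gStarW G, arensW p.1 q.1 = r.1 → α r = α p * α q)
    (ι : gStarW G) (hι : arensW ι.1 ι.1 = ι.1)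
    (αl : gLucW G → K)
    (hαl : ∀ (x : gLucW G) (q : gStarW G), arensW x.1 ι.1 = q.1 → αl x = α q) :
    (Continuous αl ∧ (∀ p : gStarW G, αl ⟨p.1, p.2.1⟩ = α p) ∧ α ι = 1) ∧
      (∀ β : gLucW G → K,
        (∀ p q r : gLucW G, arensW p.1 q.1 = r.1 → β r = β p * β q) →
        (∀ p : gStarW G, β ⟨p.1, p.2.1⟩ = α p) → β = αl) ∧
      ((∀ g : G, arensW (evalCharW g) ι.1 = arensW ι.1 (evalCharW g)) →
        ∀ p q r : gLucW G, arensW p.1 q.1 = r.1 → αl r = αl p * αl q) := by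
  have hQmem : ∀ x : gLucW G, arensW x.1 ι.1 ∈ gStarW G := fun x =>
    arensW_idem_mem_gStarW x.2 ι.2 hι
  set Q : gLucW G → gStarW G := fun x => ⟨arensW x.1 ι.1, hQmem x⟩ with hQ
  have hαlQ : ∀ x : gLucW G, αl x = α (Q x) := fun x => hαl x (Q x) rfl
  have hQcont : Continuous Q := by
    apply Continuous.subtype_mk
    exact (continuous_arensW_right ι.1).comp continuous_subtype_val
  have hαι : α ι = 1 := by
    have h := hhom ι ι ι hι
    have h' : α ι * 1 = α ι * α ι := by rw [mul_one, ← h]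
    exact (mul_left_cancel h').symm
  have hext : ∀ p : gStarW G, αl ⟨p.1, p.2.1⟩ = α p := by
    intro p
    rw [hαlQ]
    have h := hhom p ι (Q ⟨p.1, p.2.1⟩) rfl
    rw [h, hαι, mul_one]
  refine ⟨⟨by rw [funext hαlQ]; exact hcont.comp hQcont, hext, hαι⟩, ?_, ?_⟩
  · intro β hβhom hβext
    funext x
    have hr : arensW x.1 ι.1 ∈ gLucW G := (hQmem x).1
    have h1 := hβhom x ⟨ι.1, ι.2.1⟩ ⟨arensW x.1 ι.1, hr⟩ rfl
    have h2 : β ⟨ι.1, ι.2.1⟩ = 1 := by rw [hβext ι, hαι]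
    have h3 : β ⟨arensW x.1 ι.1, hr⟩ = α (Q x) := hβext (Q x)
    rw [h2, mul_one] at h1
    rw [← h1, h3, hαlQ]
  · intro hcomm p q r hpq
    exact LucPaper.part_three α hcont hhom ι hι αl hαl hcomm p q r hpq
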